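/- Let α₁, α₂ > 0, μ > 1, δ₁ = 2√(α₁α₂), and 0 < k < 1. Then for every V₀ ≥ 0 with V₀^(1/μ) ≤ k·√(α₂/α₁), the integral ∫₀^{V₀} dV/(α₁V^(1+1/μ) + α₂V^(1−1/μ) − δ₁V) is at most (μ/√(α₁α₂))·(k/(1 − k)). -/

import Mathlib

open Real MeasureTheory intervalIntegral

set_option maxHeartbeats 1000000 in
theorem stmt_9 (α₁ α₂ μ δ₁ γ₁ γ₂ k : ℝ) (h1 : 0 < α₁) (h2 : 0 < α₂) (hμ : 1 < μ)
    (hδ : δ₁ = 2 * Real.sqrt (α₁ * α₂))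
    (hγ₁ : γ₁ = 1 + 1 / μ) (hγ₂ : γ₂ = 1 - 1 / μ)
    (hk0 : 0 < k) (hk1 : k < 1)
    (V₀ : ℝ) (hV₀ : 0 ≤ V₀) (hV₀a : V₀ ^ (1 / μ) ≤ k * Real.sqrt (α₂ / α₁)) :
    ∫ V in (0:ℝ)..V₀, 1 / (α₁ * V ^ γ₁ + α₂ * V ^ γ₂ - δ₁ * V) ≤
      μ / Real.sqrt (α₁ * α₂) * (k / (1 - k)) := by
  have hμ0 : (0 : ℝ) < μ := by linarith
  have hμinv : 0 < 1 / μ := by positivity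
  set a : ℝ := Real.sqrt (α₂ / α₁) with ha_def
  have ha : 0 < a := Real.sqrt_pos.2 (div_pos h2 h1)
  have ha2 : α₁ * a ^ 2 = α₂ := by
    have : a ^ 2 = α₂ / α₁ := Real.sq_sqrt (div_pos h2 h1).le
    rw [this]; field_simp
  have hsq : Real.sqrt (α₁ * α₂) = α₁ * a := by
    rw [ha_def, ← Real.sqrt_sq h1.le, ← Real.sqrt_mul (by positivity)]
    congr 1
    field_simp; ring_nf; rw [Real.sq_sqrt (sq_nonneg _)]
  have hδa : δ₁ = 2 * (α₁ * a) := by rw [hδ, hsq]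
  set x₀ : ℝ := V₀ ^ (1 / μ) with hx₀_def
  have hx₀0 : 0 ≤ x₀ := Real.rpow_nonneg hV₀ _
  have hx₀ : x₀ ≤ k * a := hV₀a
  have hka : k * a < a := by nlinarith
  -- the antiderivative
  set F : ℝ → ℝ := fun V => (μ / α₁) * (a - V ^ (1 / μ))⁻¹ with hF_def
  set f : ℝ → ℝ := fun V => 1 / (α₁ * V ^ γ₁ + α₂ * V ^ γ₂ - δ₁ * V) with hf_def
  -- bound on V^(1/μ) for V in the interval
  have hbound : ∀ V ∈ Set.Icc (0:ℝ) V₀, V ^ (1 / μ) ≤ k * a := fun V hV =>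
    le_trans (Real.rpow_le_rpow hV.1 hV.2 hμinv.le) hx₀
  have hgap : ∀ V ∈ Set.Icc (0:ℝ) V₀, (1 - k) * a ≤ a - V ^ (1 / μ) := by
    intro V hV
    have := hbound V hV
    nlinarith
  have hgap0 : (0:ℝ) < (1 - k) * a := by nlinarith
  -- factorization of the denominator for V > 0
  have hfact : ∀ V : ℝ, 0 < V →
      α₁ * V ^ γ₁ + α₂ * V ^ γ₂ - δ₁ * V = α₁ * V ^ γ₂ * (V ^ (1 / μ) - a) ^ 2 := by
    intro V hV
    have e1 : V ^ γ₁ = V ^ γ₂ * (V ^ (1 / μ)) ^ 2 := by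
      rw [← Real.rpow_natCast (V ^ (1/μ)) 2, ← Real.rpow_mul hV.le, ← Real.rpow_add hV]
      congr 1; rw [hγ₁, hγ₂]; push_cast; ring
    have e2 : V = V ^ γ₂ * V ^ (1 / μ) := by
      rw [← Real.rpow_add hV]
      rw [hγ₂]
      norm_num
    rw [e1]
    linear_combination (-(V ^ γ₂)) * ha2 - δ₁ * e2 - (V ^ γ₂ * V ^ (1 / μ)) * hδa
  -- derivative computation
  have hderiv : ∀ V ∈ Set.Ioo (0:ℝ) V₀, HasDerivAt F (f V) V := by
    intro V hV
    have hVpos : 0 < V := hV.1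
    have hVmem : V ∈ Set.Icc (0:ℝ) V₀ := ⟨hV.1.le, hV.2.le⟩
    have hne : a - V ^ (1 / μ) ≠ 0 := by
      have := hgap V hVmem; nlinarith
    have d1 : HasDerivAt (fun V : ℝ => V ^ (1 / μ)) (1 / μ * V ^ (1 / μ - 1)) V :=
      Real.hasDerivAt_rpow_const (Or.inl hVpos.ne')
    have d2 : HasDerivAt (fun V : ℝ => a - V ^ (1 / μ)) (-(1 / μ * V ^ (1 / μ - 1))) V := by
      exact ((hasDerivAt_const V a).sub d1).congr_deriv (by ring)
    have d3 : HasDerivAt (fun V : ℝ => (a - V ^ (1 / μ))⁻¹)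
        (-(-(1 / μ * V ^ (1 / μ - 1))) / (a - V ^ (1 / μ)) ^ 2) V := d2.inv hne
    have d4 := d3.const_mul (μ / α₁)
    refine d4.congr_deriv ?_
    symm
    have hrpow : V ^ (1 / μ - 1) = (V ^ γ₂)⁻¹ := by
      rw [← Real.rpow_neg hVpos.le]
      congr 1; rw [hγ₂]; ring
    have hγ₂pos : V ^ γ₂ ≠ 0 := by
      have : 0 < V ^ γ₂ := Real.rpow_pos_of_pos hVpos _
      exact this.ne'
    rw [hf_def]
    simp only
    rw [hfact V hVpos, hrpow]
    have h5 : (V ^ (1/μ) - a) ^ 2 = (a - V ^ (1/μ)) ^ 2 := by ring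
    rw [h5]
    field_simp
    try ring
  -- continuity of F on [0, V₀]
  have hcontpow : ∀ c : ℝ, 0 ≤ c → Continuous (fun V : ℝ => V ^ c) := by
    intro c hc
    apply continuous_iff_continuousAt.2
    intro x
    exact Real.continuousAt_rpow_const x _ (Or.inr hc)
  have hrpow_cont : Continuous (fun V : ℝ => V ^ (1 / μ)) := hcontpow _ hμinv.le
  have hFcont : ContinuousOn F (Set.Icc 0 V₀) := by
    apply ContinuousOn.mul continuousOn_const
    apply ContinuousOn.inv₀
    · exact (continuous_const.sub hrpow_cont).continuousOn
    · intro V hV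
      have := hgap V hV; nlinarith
  -- interval integrability of f
  have hint : IntervalIntegrable f volume 0 V₀ := by
    rcases eq_or_lt_of_le hV₀ with h0 | hV₀pos
    · rw [← h0]
    have hg : IntervalIntegrable
        (fun V : ℝ => (1 / (α₁ * ((1 - k) * a) ^ 2)) * V ^ (1 / μ - 1)) volume 0 V₀ := by
      apply IntervalIntegrable.const_mul
      apply intervalIntegral.intervalIntegrable_rpow'
      linarith
    apply hg.mono_fun
    · apply Measurable.aestronglyMeasurable
      apply Measurable.div measurable_const
      have hc1 : Continuous (fun V : ℝ => V ^ γ₁) := hcontpow _ (by rw [hγ₁]; positivity)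
      have hc2 : Continuous (fun V : ℝ => V ^ γ₂) := hcontpow _ (by
        rw [hγ₂]
        have : 1 / μ < 1 := by rw [div_lt_one hμ0]; exact hμ
        linarith)
      exact (((continuous_const.mul hc1).add (continuous_const.mul hc2)).sub
        (continuous_const.mul continuous_id)).measurable
    · rw [Filter.EventuallyLE, ae_restrict_iff' measurableSet_uIoc]
      apply Filter.Eventually.of_forall
      intro V hV
      rw [Set.uIoc_of_le hV₀] at hV
      have hVpos : 0 < V := hV.1
      have hVmem : V ∈ Set.Icc (0:ℝ) V₀ := ⟨hV.1.le, hV.2⟩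
      have hgapV := hgap V hVmem
      have hγ₂pos : 0 < V ^ γ₂ := Real.rpow_pos_of_pos hVpos _
      have hrpow : V ^ (1 / μ - 1) = (V ^ γ₂)⁻¹ := by
        rw [← Real.rpow_neg hVpos.le]
        congr 1; rw [hγ₂]; ring
      have hfV : f V = V ^ (1 / μ - 1) / (α₁ * (a - V ^ (1 / μ)) ^ 2) := by
        rw [hf_def]; simp only
        rw [hfact V hVpos, hrpow]
        rw [show (V ^ (1/μ) - a) ^ 2 = (a - V ^ (1/μ)) ^ 2 by ring]
        field_simp
        try ring
      have hden : 0 < a - V ^ (1 / μ) := lt_of_lt_of_le hgap0 hgapV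
      have hfpos : 0 ≤ f V := by
        rw [hfV]; positivity
      simp only [Real.norm_eq_abs, abs_of_nonneg hfpos]
      rw [hfV]
      have hV1 : 0 < V ^ (1 / μ - 1) := Real.rpow_pos_of_pos hVpos _
      have h2' : ((1 - k) * a) ^ 2 ≤ (a - V ^ (1 / μ)) ^ 2 := by nlinarith
      calc V ^ (1 / μ - 1) / (α₁ * (a - V ^ (1 / μ)) ^ 2)
          ≤ V ^ (1 / μ - 1) / (α₁ * ((1 - k) * a) ^ 2) := by
            gcongr
            all_goals nlinarith
        _ = 1 / (α₁ * ((1 - k) * a) ^ 2) * V ^ (1 / μ - 1) := by ring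
        _ ≤ ‖1 / (α₁ * ((1 - k) * a) ^ 2) * V ^ (1 / μ - 1)‖ := le_abs_self _
  -- FTC
  have hFTC : ∫ V in (0:ℝ)..V₀, f V = F V₀ - F 0 := by
    apply intervalIntegral.integral_eq_sub_of_hasDeriv_right_of_le hV₀ hFcont
      (fun x hx => (hderiv x hx).hasDerivWithinAt) hint
  have hμne : (1:ℝ) / μ ≠ 0 := hμinv.ne'
  have hF0 : F 0 = (μ / α₁) * a⁻¹ := by
    simp only [hF_def]
    rw [Real.zero_rpow hμne, sub_zero]
  have hFV₀ : F V₀ = (μ / α₁) * (a - x₀)⁻¹ := rfl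
  rw [show (∫ V in (0:ℝ)..V₀, 1 / (α₁ * V ^ γ₁ + α₂ * V ^ γ₂ - δ₁ * V)) =
      ∫ V in (0:ℝ)..V₀, f V from rfl, hFTC, hF0, hFV₀, hsq]
  -- final inequality
  have hd : (1 - k) * a ≤ a - x₀ := by nlinarith
  have hdpos : 0 < a - x₀ := lt_of_lt_of_le hgap0 hd
  have hane : a ≠ 0 := ha.ne'
  have hdne : a - x₀ ≠ 0 := hdpos.ne'
  have hkne : (1:ℝ) - k ≠ 0 := by linarith
  have key : (a - x₀)⁻¹ - a⁻¹ ≤ a⁻¹ * (k / (1 - k)) := by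
    rw [show (a - x₀)⁻¹ - a⁻¹ = x₀ / (a * (a - x₀)) by (field_simp; try ring; try tauto),
        show a⁻¹ * (k / (1 - k)) = (k * a) / (a * ((1 - k) * a)) by (field_simp; try ring; try tauto)]
    exact div_le_div₀ (by positivity) hx₀ (by positivity)
      (mul_le_mul_of_nonneg_left hd ha.le)
  calc (μ / α₁) * (a - x₀)⁻¹ - (μ / α₁) * a⁻¹
      = (μ / α₁) * ((a - x₀)⁻¹ - a⁻¹) := by ring
    _ ≤ (μ / α₁) * (a⁻¹ * (k / (1 - k))) :=
        mul_le_mul_of_nonneg_left key (by positivity)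
    _ = μ / (α₁ * a) * (k / (1 - k)) := by field_simp; try ring
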